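/- Assume every A_k is a real symmetric matrix and every B_k is a real invertible matrix, with C_k = B_{k−1}ᵀ for k = 2,…,n and C_1 = B_nᵀ. Let E be real. If z ∈ ℂ is a nonzero eigenvalue of T(E), then 1/z, z̄, and 1/z̄ are also eigenvalues of T(E). -/

import Mathlib

open Matrix

noncomputable def tstep {m : ℕ} (A B C : Matrix (Fin m) (Fin m) ℂ) (E : ℂ) :
    Matrix (Fin m ⊕ Fin m) (Fin m ⊕ Fin m) ℂ :=
  Matrix.fromBlocks (B⁻¹ * (E • 1 - A)) (-(B⁻¹ * C)) 1 0

/-- The transfer matrix `T(E) = t_n(E) ⋯ t_1(E)` (0-indexed: `t_{n-1} ⋯ t_0`). -/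
noncomputable def transfer {n m : ℕ} (A B C : Fin n → Matrix (Fin m) (Fin m) ℂ) (E : ℂ) :
    Matrix (Fin m ⊕ Fin m) (Fin m ⊕ Fin m) ℂ :=
  ((List.ofFn fun k : Fin n => tstep (A k) (B k) (C k) E).reverse).prod

/-- The transfer matrix (over `ℂ`) of the real symmetric chain, with
`C_k = B_{k-1}ᵀ` cyclically (`C_1 = B_nᵀ`). -/
noncomputable def transferR {n m : ℕ} (hn : 0 < n) (A B : Fin n → Matrix (Fin m) (Fin m) ℝ)
    (E : ℂ) : Matrix (Fin m ⊕ Fin m) (Fin m ⊕ Fin m) ℂ :=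
  transfer (fun k => (A k).map Complex.ofReal) (fun k => (B k).map Complex.ofReal)
    (fun k => (((B ⟨((k : ℕ) + (n - 1)) % n, Nat.mod_lt _ hn⟩)ᵀ).map Complex.ofReal)) E

/-- The symplectic-type form attached to `B`. -/
noncomputable def Om {m : ℕ} (B : Matrix (Fin m) (Fin m) ℂ) :
    Matrix (Fin m ⊕ Fin m) (Fin m ⊕ Fin m) ℂ :=
  Matrix.fromBlocks 0 Bᵀ (-B) 0

lemma om_unit {m : ℕ} (B : Matrix (Fin m) (Fin m) ℂ) (hB : IsUnit B.det) :
    IsUnit (Om B).det := by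
  apply Matrix.isUnit_det_of_right_inverse (B := Matrix.fromBlocks 0 (-B⁻¹) (Bᵀ)⁻¹ 0)
  have h1 : Bᵀ * (Bᵀ)⁻¹ = 1 := Matrix.mul_nonsing_inv _ (by rwa [Matrix.det_transpose])
  have h2 : B * B⁻¹ = 1 := Matrix.mul_nonsing_inv _ hB
  simp [Om, Matrix.fromBlocks_multiply, h1, h2, ← Matrix.fromBlocks_one]

lemma step_rel {m : ℕ} (A B C : Matrix (Fin m) (Fin m) ℂ) (E : ℂ) (hA : Aᵀ = A)
    (hB : IsUnit B.det) :
    (tstep A B C E)ᵀ * Om B * tstep A B C E = Matrix.fromBlocks 0 C (-Cᵀ) 0 := by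
  have hBT : IsUnit Bᵀ.det := by rwa [Matrix.det_transpose]
  have hP : (B⁻¹ * (E • 1 - A))ᵀ = (E • 1 - A) * (Bᵀ)⁻¹ := by
    rw [Matrix.transpose_mul, Matrix.transpose_nonsing_inv, Matrix.transpose_sub,
      Matrix.transpose_smul, Matrix.transpose_one, hA]
  have hQ : (-(B⁻¹ * C))ᵀ = -(Cᵀ * (Bᵀ)⁻¹) := by
    rw [Matrix.transpose_neg, Matrix.transpose_mul, Matrix.transpose_nonsing_inv]
  rw [tstep, Om, Matrix.fromBlocks_transpose, hP, hQ, Matrix.fromBlocks_multiply,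
    Matrix.fromBlocks_multiply]
  simp only [Matrix.mul_one, Matrix.one_mul, Matrix.mul_zero, Matrix.zero_mul, Matrix.mul_neg,
    Matrix.neg_mul, add_zero, zero_add, Matrix.nonsing_inv_mul_cancel_right _ _ hBT,
    Matrix.mul_nonsing_inv_cancel_left _ _ hB]
  simp [Matrix.mul_nonsing_inv_cancel_left _ _ hB]

/-- Partial products, peeling the last factor. -/
lemma prod_succ {m j : ℕ} (t : ℕ → Matrix (Fin m ⊕ Fin m) (Fin m ⊕ Fin m) ℂ) :
    ((List.ofFn fun k : Fin (j + 1) => t k).reverse).prod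
      = t j * ((List.ofFn fun k : Fin j => t k).reverse).prod := by
  rw [List.ofFn_succ']
  simp

/-- Telescoping of the symplectic relation along the product. -/
lemma prod_rel {m n : ℕ} (hn : 0 < n)
    (t O : ℕ → Matrix (Fin m ⊕ Fin m) (Fin m ⊕ Fin m) ℂ)
    (h : ∀ k < n, (t k)ᵀ * O k * t k = O (if k = 0 then n - 1 else k - 1)) :
    ∀ j, 1 ≤ j → j ≤ n →
      (((List.ofFn fun k : Fin j => t k).reverse).prod)ᵀ * O (j - 1)
        * ((List.ofFn fun k : Fin j => t k).reverse).prod = O (n - 1) := by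
  intro j
  induction j with
  | zero => omega
  | succ j ih =>
    intro _ hjn
    rcases Nat.eq_zero_or_pos j with rfl | hj
    · have := h 0 hn
      simpa [prod_succ] using this
    · rw [prod_succ, Matrix.transpose_mul]
      have hstep := h j (by omega)
      rw [if_neg (by omega)] at hstep
      calc (((List.ofFn fun k : Fin j => t k).reverse).prod)ᵀ * (t j)ᵀ * O (j + 1 - 1)
            * (t j * ((List.ofFn fun k : Fin j => t k).reverse).prod)
          = (((List.ofFn fun k : Fin j => t k).reverse).prod)ᵀ * ((t j)ᵀ * O j * t j)
            * ((List.ofFn fun k : Fin j => t k).reverse).prod := by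
            simp only [Nat.add_sub_cancel, Matrix.mul_assoc]
        _ = (((List.ofFn fun k : Fin j => t k).reverse).prod)ᵀ * O (j - 1)
            * ((List.ofFn fun k : Fin j => t k).reverse).prod := by rw [hstep]
        _ = O (n - 1) := ih hj (by omega)

/-- The eigenvalue-inversion step from the symplectic relation. -/
lemma inv_ev {m : ℕ} (T W : Matrix (Fin m ⊕ Fin m) (Fin m ⊕ Fin m) ℂ)
    (hsymp : Tᵀ * W * T = W) (hW : IsUnit W.det) (z : ℂ) (hz : z ≠ 0)
    (h : (T - z • 1).det = 0) : (T - z⁻¹ • 1).det = 0 := by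
  have key : W * (T - z⁻¹ • 1) = (-z⁻¹) • ((T - z • 1)ᵀ * (W * T)) := by
    have h1 : (T - z • 1)ᵀ = Tᵀ - z • 1 := by
      rw [Matrix.transpose_sub, Matrix.transpose_smul, Matrix.transpose_one]
    rw [h1, Matrix.sub_mul, Matrix.smul_mul, Matrix.one_mul, ← Matrix.mul_assoc, hsymp,
      Matrix.mul_sub, Matrix.mul_smul, Matrix.mul_one, smul_sub, smul_smul]
    have hzz : -z⁻¹ * z = -1 := by field_simp
    rw [hzz]
    rw [show (-1 : ℂ) • (W * T) = -(W * T) by simp]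
    rw [sub_neg_eq_add]
    abel_nf
    simp [smul_smul, smul_eq_mul]
  have hdet := congrArg Matrix.det key
  rw [Matrix.det_mul, Matrix.det_smul, Matrix.det_mul, Matrix.det_transpose, h, zero_mul,
    mul_zero] at hdet
  exact (hW.mul_right_eq_zero).mp hdet

lemma map_conj_self {m : ℕ} (M : Matrix (Fin m) (Fin m) ℝ) :
    (M.map Complex.ofReal).map (starRingEnd ℂ) = M.map Complex.ofReal := by
  ext i j
  simp [Matrix.map_apply, Complex.conj_ofReal]

lemma tstep_conj {m : ℕ} (A B C : Matrix (Fin m) (Fin m) ℝ) (E : ℝ)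
    (hB : IsUnit ((B.map Complex.ofReal)).det) :
    ((tstep (A.map Complex.ofReal) (B.map Complex.ofReal)
      (C.map Complex.ofReal) (E : ℂ)).map (starRingEnd ℂ))
    = tstep (A.map Complex.ofReal) (B.map Complex.ofReal) (C.map Complex.ofReal) (E : ℂ) := by
  have hinv : ((B.map Complex.ofReal)⁻¹).map (starRingEnd ℂ) = (B.map Complex.ofReal)⁻¹ := by
    have h1 : B.map Complex.ofReal * (B.map Complex.ofReal)⁻¹ = 1 :=
      Matrix.mul_nonsing_inv _ hB
    have h2 := congrArg (fun M => M.map (starRingEnd ℂ)) h1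
    rw [Matrix.map_mul (f := starRingEnd ℂ), map_conj_self] at h2
    have h3 : (1 : Matrix (Fin m) (Fin m) ℂ).map (starRingEnd ℂ) = 1 := by
      ext i j; by_cases hij : i = j <;> simp [Matrix.map_apply, Matrix.one_apply, hij]
    rw [h3] at h2
    exact (Matrix.inv_eq_right_inv h2).symm
  have hA' : (((E : ℂ) • 1 - A.map Complex.ofReal)).map (starRingEnd ℂ)
      = (E : ℂ) • 1 - A.map Complex.ofReal := by
    ext i j
    by_cases hij : i = j <;>
      simp [Matrix.map_apply, Matrix.sub_apply, Matrix.smul_apply, Matrix.one_apply, hij,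
        Complex.conj_ofReal]
  have h11 : ((B.map Complex.ofReal)⁻¹ * ((E : ℂ) • 1 - A.map Complex.ofReal)).map
      (starRingEnd ℂ) = (B.map Complex.ofReal)⁻¹ * ((E : ℂ) • 1 - A.map Complex.ofReal) := by
    rw [Matrix.map_mul (f := starRingEnd ℂ), hinv, hA']
  have h12 : (-((B.map Complex.ofReal)⁻¹ * C.map Complex.ofReal)).map (starRingEnd ℂ)
      = -((B.map Complex.ofReal)⁻¹ * C.map Complex.ofReal) := by
    have hmul : ((B.map Complex.ofReal)⁻¹ * C.map Complex.ofReal).map (starRingEnd ℂ)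
        = (B.map Complex.ofReal)⁻¹ * C.map Complex.ofReal := by
      rw [Matrix.map_mul (f := starRingEnd ℂ), hinv, map_conj_self]
    have hneg : (-((B.map Complex.ofReal)⁻¹ * C.map Complex.ofReal)).map (starRingEnd ℂ)
        = -(((B.map Complex.ofReal)⁻¹ * C.map Complex.ofReal).map (starRingEnd ℂ)) := by
      ext i j; simp only [Matrix.map_apply, Matrix.neg_apply, map_neg]
    rw [hneg, hmul]
  have h21 : (1 : Matrix (Fin m) (Fin m) ℂ).map (starRingEnd ℂ) = 1 := by
    ext i j; by_cases hij : i = j <;> simp [Matrix.map_apply, Matrix.one_apply, hij]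
  have h22 : (0 : Matrix (Fin m) (Fin m) ℂ).map (starRingEnd ℂ) = 0 := by
    ext i j; simp [Matrix.map_apply]
  rw [tstep, Matrix.fromBlocks_map, h11, h12, h21, h22]

/-- For the real symmetric chain and real `E`: if `z` is a nonzero eigenvalue of
`T(E)`, then so are `1/z`, `z̄` and `1/z̄`. -/
theorem stmt19 {n m : ℕ} (hn : 2 ≤ n) (hm : 1 ≤ m)
    (A B : Fin n → Matrix (Fin m) (Fin m) ℝ)
    (hA : ∀ k, (A k).IsSymm) (hB : ∀ k, IsUnit (B k)) (E : ℝ) (z : ℂ) (hz : z ≠ 0)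
    (hev : (transferR (by omega) A B (E : ℂ) - z • 1).det = 0) :
    (transferR (by omega : 0 < n) A B (E : ℂ) - z⁻¹ • 1).det = 0 ∧
    (transferR (by omega : 0 < n) A B (E : ℂ) - (starRingEnd ℂ z) • 1).det = 0 ∧
    (transferR (by omega : 0 < n) A B (E : ℂ) - ((starRingEnd ℂ z)⁻¹) • 1).det = 0 := by
  have hn0 : 0 < n := by omega
  -- determinants of the complexified B are units
  have hBdet : ∀ k : Fin n, IsUnit ((B k).map Complex.ofReal).det := by
    intro k
    have h1 : IsUnit (B k).det := (Matrix.isUnit_iff_isUnit_det _).mp (hB k)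
    have h2 : ((B k).map Complex.ofReal).det = ((B k).det : ℂ) := by
      rw [show ((B k).map Complex.ofReal) = Complex.ofRealHom.mapMatrix (B k) from rfl,
        ← RingHom.map_det]
      rfl
    rw [h2]
    simp only [isUnit_iff_ne_zero, Complex.ofReal_ne_zero]
    intro hcon
    rw [hcon] at h1
    simp at h1
  -- symmetry of the complexified A
  have hAsymm : ∀ k : Fin n, ((A k).map Complex.ofReal)ᵀ = (A k).map Complex.ofReal := by
    intro k
    ext i j
    simp only [Matrix.transpose_apply, Matrix.map_apply]
    exact_mod_cast congrFun (congrFun (hA k) i) j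
  -- ℕ-indexed data
  set tN : ℕ → Matrix (Fin m ⊕ Fin m) (Fin m ⊕ Fin m) ℂ := fun k =>
    if h : k < n then tstep ((A ⟨k, h⟩).map Complex.ofReal) ((B ⟨k, h⟩).map Complex.ofReal)
      ((((B ⟨(k + (n - 1)) % n, Nat.mod_lt _ hn0⟩)ᵀ).map Complex.ofReal)) (E : ℂ) else 1 with htN
  set ON : ℕ → Matrix (Fin m ⊕ Fin m) (Fin m ⊕ Fin m) ℂ := fun k =>
    if h : k < n then Om ((B ⟨k, h⟩).map Complex.ofReal) else 1 with hON
  have hTprod : transferR hn0 A B (E : ℂ)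
      = ((List.ofFn fun k : Fin n => tN k).reverse).prod := by
    rw [transferR, transfer]
    refine congrArg List.prod (congrArg List.reverse (congrArg List.ofFn (funext fun k => ?_)))
    simp only [htN, dif_pos k.isLt, Fin.eta]
  set T := transferR hn0 A B (E : ℂ) with hT
  -- step relation
  have hstepN : ∀ k < n, (tN k)ᵀ * ON k * tN k = ON (if k = 0 then n - 1 else k - 1) := by
    intro k hk
    have hpred : (k + (n - 1)) % n = if k = 0 then n - 1 else k - 1 := by
      rcases Nat.eq_zero_or_pos k with rfl | hkpos
      · simp [Nat.mod_eq_of_lt (by omega : n - 1 < n)]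
      · rw [if_neg (by omega)]
        have hk1 : k + (n - 1) = (k - 1) + n := by omega
        rw [hk1, Nat.add_mod_right, Nat.mod_eq_of_lt (by omega)]
    have hlt : (if k = 0 then n - 1 else k - 1) < n := by split <;> omega
    simp only [htN, hON, dif_pos hk, dif_pos hlt]
    rw [step_rel _ _ _ _ (hAsymm _) (hBdet _), Om]
    have hfin : (⟨(k + (n - 1)) % n, Nat.mod_lt _ hn0⟩ : Fin n)
        = ⟨if k = 0 then n - 1 else k - 1, hlt⟩ := Fin.ext hpred
    rw [hfin]
    have htr : ((B ⟨if k = 0 then n - 1 else k - 1, hlt⟩)ᵀ).map Complex.ofReal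
        = ((B ⟨if k = 0 then n - 1 else k - 1, hlt⟩).map Complex.ofReal)ᵀ := by
      ext i j; simp [Matrix.map_apply, Matrix.transpose_apply]
    rw [htr, Matrix.transpose_transpose]
  -- symplectic invariance of T
  have hsymp : Tᵀ * ON (n - 1) * T = ON (n - 1) := by
    rw [hTprod]
    exact prod_rel hn0 tN ON hstepN n (by omega) le_rfl
  have hWunit : IsUnit (ON (n - 1)).det := by
    simp only [hON, dif_pos (by omega : n - 1 < n)]
    exact om_unit _ (hBdet _)
  -- conjugation invariance of T
  have hTconj : T.map (starRingEnd ℂ) = T := by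
    rw [hTprod, show ((List.ofFn fun k : Fin n => tN k).reverse).prod.map (starRingEnd ℂ)
      = (starRingEnd ℂ).mapMatrix ((List.ofFn fun k : Fin n => tN k).reverse).prod from rfl,
      map_list_prod]
    congr 1
    rw [List.map_reverse]
    congr 1
    rw [List.map_ofFn]
    refine congrArg List.ofFn (funext fun k => ?_)
    simp only [Function.comp_apply, RingHom.mapMatrix_apply, htN, dif_pos k.isLt]
    exact tstep_conj _ _ _ _ (hBdet _)
  -- conjugation of eigenvalues
  have hconj : ∀ w : ℂ, (T - w • 1).det = 0 → (T - (starRingEnd ℂ) w • 1).det = 0 := by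
    intro w hw
    have h1 : (T - w • 1).map (starRingEnd ℂ) = T - (starRingEnd ℂ) w • 1 := by
      have hsub : (T - w • 1).map (starRingEnd ℂ)
          = T.map (starRingEnd ℂ) - (w • (1 : Matrix _ _ ℂ)).map (starRingEnd ℂ) := by
        ext i j; simp [Matrix.map_apply]
      rw [hsub, hTconj]
      congr 1
      ext i j
      by_cases hij : i = j <;>
        simp [Matrix.map_apply, Matrix.smul_apply, Matrix.one_apply, hij]
    have h3 := (starRingEnd ℂ).map_det (T - w • 1)
    rw [hw, map_zero, RingHom.mapMatrix_apply, h1] at h3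
    exact h3.symm
  have hinvz : (T - z⁻¹ • 1).det = 0 := inv_ev T (ON (n - 1)) hsymp hWunit z hz hev
  have hconjz : (T - (starRingEnd ℂ) z • 1).det = 0 := hconj z hev
  have hzc : (starRingEnd ℂ) z ≠ 0 := by simpa using hz
  have hconjinv : (T - ((starRingEnd ℂ) z)⁻¹ • 1).det = 0 :=
    inv_ev T (ON (n - 1)) hsymp hWunit _ hzc hconjz
  exact ⟨hinvz, hconjz, hconjinv⟩
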